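/- For every positive integer x there exists a unique natural number k and a unique tuple (b_0, …, b_k) ∈ {0,1}^{k+1} such that x = Σ_{i=0}^k b_i·l̃_i, b_k = 1, b_0·b_2 = 0, and b_i·b_{i+1} = 0 for all i ∈ {0, …, k−1}. Moreover, this decomposition is minimal in the number of summands: if x = Σ_{i=0}^{k'} c_i·l̃_i for any k' ∈ ℕ and any tuple (c_0, …, c_{k'}) of natural numbers, then Σ_{i=0}^k b_i ≤ Σ_{i=0}^{k'} c_i. -/

import Mathlib

/-- The Lucas sequence: l 0 = 2, l 1 = 1, l (n+2) = l (n+1) + l n. -/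
def lucas : ℕ → ℕ
  | 0 => 2
  | 1 => 1
  | n + 2 => lucas (n + 1) + lucas n

/-- The modified (monotone) Lucas sequence: l̃ 0 = 1, l̃ 1 = 2, l̃ n = l n for n ≥ 2. -/
def ltil : ℕ → ℕ
  | 0 => 1
  | 1 => 2
  | n + 2 => lucas (n + 2)

/-- β x : minimal number of summands in a representation of x as a sum of
modified Lucas numbers (with repetitions allowed). -/
noncomputable def beta (x : ℕ) : ℕ :=
  sInf {s : ℕ | ∃ k : ℕ, ∃ b : ℕ → ℕ,
    x = ∑ i ∈ Finset.range (k + 1), b i * ltil i ∧ s = ∑ i ∈ Finset.range (k + 1), b i}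

/-- γ x : the greatest k with l̃ k ≤ x (for x ≥ 1). -/
noncomputable def gamma (x : ℕ) : ℕ := sSup {k : ℕ | ltil k ≤ x}

/-- S a : the additive submonoid of ℕ generated by {l_a} ∪ {l_a + l_n : n ∈ ℕ}. -/
def Sset (a : ℕ) : AddSubmonoid ℕ :=
  AddSubmonoid.closure ({lucas a} ∪ {x : ℕ | ∃ n : ℕ, x = lucas a + lucas n})

/-- T a : the additive submonoid of ℕ generated by {l_a + l_n : n ∈ ℕ}. -/
def Tset (a : ℕ) : AddSubmonoid ℕ :=
  AddSubmonoid.closure {x : ℕ | ∃ n : ℕ, x = lucas a + lucas n}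


lemma lucas_pos : ∀ n, 0 < lucas n
  | 0 => by simp [lucas]
  | 1 => by simp [lucas]
  | n+2 => by have := lucas_pos n; simp only [lucas]; omega

lemma ltil_rec (n : ℕ) : ltil (n+4) = ltil (n+3) + ltil (n+2) := rfl

lemma ltil_pos : ∀ n, 0 < ltil n
  | 0 => by decide
  | 1 => by decide
  | n+2 => lucas_pos (n+2)

lemma ltil_lt_succ : ∀ n, ltil n < ltil (n+1)
  | 0 => by decide
  | 1 => by decide
  | 2 => by decide
  | n+3 => by have := ltil_pos (n+2); rw [ltil_rec]; omega

lemma ltil_mono : StrictMono ltil := strictMono_nat_of_lt_succ ltil_lt_succ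

lemma ltil_ge (n : ℕ) : n + 1 ≤ ltil n := by
  induction n with
  | zero => decide
  | succ n ih => have := ltil_lt_succ n; omega

def ZRep (k : ℕ) (b : ℕ → ℕ) : Prop :=
  (∀ i, b i ≤ 1) ∧ (∀ i, k < i → b i = 0) ∧ b k = 1 ∧ b 0 * b 2 = 0 ∧ ∀ i < k, b i * b (i + 1) = 0

noncomputable def zval (k : ℕ) (b : ℕ → ℕ) : ℕ := ∑ i ∈ Finset.range (k+1), b i * ltil i

lemma trunc {k : ℕ} {b : ℕ → ℕ} (h : ZRep k b) (hk : ∃ i, i < k ∧ b i ≠ 0) :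
    ∃ j, j + 2 ≤ k ∧ 3 ≤ k ∧ ZRep j (fun i => if i ≤ j then b i else 0) ∧
      (∑ i ∈ Finset.range k, b i * ltil i) = zval j (fun i => if i ≤ j then b i else 0) ∧
      (∀ i, j < i → i < k → b i = 0) := by
  obtain ⟨hle, hhi, hbk, h02, hadj⟩ := h
  obtain ⟨i0, hi0, hbi0⟩ := hk
  have hk3 : 3 ≤ k := by
    by_contra hc
    interval_cases k
    · omega
    · have h1 : b 0 * b 1 = 0 := hadj 0 (by omega)
      rw [hbk, mul_one] at h1
      have he : i0 = 0 := by omega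
      subst he; omega
    · have h1 : b 1 * b 2 = 0 := hadj 1 (by omega)
      have h0 := h02
      rw [hbk, mul_one] at h1 h0
      have : i0 = 0 ∨ i0 = 1 := by omega
      rcases this with h | h <;> subst h <;> omega
  set j := Nat.findGreatest (fun i => b i ≠ 0) (k-1) with hj
  have hspec : b j ≠ 0 := Nat.findGreatest_spec (P := fun i => b i ≠ 0) (show i0 ≤ k-1 by omega) hbi0
  have hjle : j ≤ k - 1 := Nat.findGreatest_le _
  have hgr : ∀ i, j < i → i < k → b i = 0 := by
    intro i h1 h2
    by_contra hc
    exact Nat.findGreatest_is_greatest h1 (by omega) hc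
  have hbk1 : b (k-1) = 0 := by
    have h1 : b (k-1) * b ((k-1)+1) = 0 := hadj _ (by omega)
    rw [show k-1+1 = k from by omega, hbk, mul_one] at h1
    exact h1
  have hjk : j + 2 ≤ k := by
    have hne : j ≠ k - 1 := by
      intro h'
      rw [h'] at hspec
      exact hspec hbk1
    omega
  have hbj : b j = 1 := by have := hle j; omega
  refine ⟨j, hjk, hk3, ⟨?_, ?_, ?_, ?_, ?_⟩, ?_, hgr⟩
  · intro i; dsimp only; split <;> [exact hle i; omega]
  · intro i hi; dsimp only; rw [if_neg (by omega)]
  · dsimp only; rw [if_pos (le_refl j)]; exact hbj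
  · dsimp only
    by_cases h2 : 2 ≤ j
    · rw [if_pos (Nat.zero_le j), if_pos h2]; exact h02
    · rw [if_pos (Nat.zero_le j), if_neg h2, mul_zero]
  · intro i hi; dsimp only
    rw [if_pos (by omega), if_pos (by omega)]
    exact hadj i (by omega)
  · rw [zval]
    rw [← Finset.sum_subset (Finset.range_subset_range.2 (show j+1 ≤ k by omega))
        (fun i hi hni => ?_)]
    · exact Finset.sum_congr rfl fun i hi => by
        rw [if_pos (by simpa using Nat.lt_succ_iff.1 (Finset.mem_range.1 hi))]
    · have hik : i < k := Finset.mem_range.1 hi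
      have h1 : j < i := by
        by_contra hc
        exact hni (Finset.mem_range.2 (by omega))
      rw [hgr i h1 hik, zero_mul]

lemma zval_ge {k : ℕ} {b : ℕ → ℕ} (h : ZRep k b) : ltil k ≤ zval k b := by
  have := Finset.single_le_sum (f := fun i => b i * ltil i)
    (fun i _ => Nat.zero_le _) (Finset.self_mem_range_succ k)
  rw [zval]
  rw [h.2.2.1, one_mul] at this
  exact this

lemma zval_lt : ∀ k : ℕ, ∀ b : ℕ → ℕ, ZRep k b → zval k b < ltil (k+1) := by
  intro k
  induction k using Nat.strong_induction_on with
  | _ k ih =>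
    intro b h
    have hsum : zval k b = (∑ i ∈ Finset.range k, b i * ltil i) + ltil k := by
      rw [zval, Finset.sum_range_succ, h.2.2.1, one_mul]
    by_cases hz : ∃ i, i < k ∧ b i ≠ 0
    · obtain ⟨j, hj2, hk3, hzr, hval, _⟩ := trunc h hz
      have h1 := ih j (by omega) _ hzr
      obtain ⟨m, rfl⟩ : ∃ m, k = m + 3 := ⟨k - 3, by omega⟩
      have h3 : ltil (m+3) + ltil (m+2) = ltil (m+4) := (ltil_rec m).symm
      have h2' : ltil (j+1) ≤ ltil (m+2) := ltil_mono.le_iff_le.2 (by omega)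
      rw [show m+3+1 = m+4 from rfl]
      omega
    · have h0 : (∑ i ∈ Finset.range k, b i * ltil i) = 0 :=
        Finset.sum_eq_zero fun i hi => by
          have : b i = 0 := by
            by_contra hc; exact hz ⟨i, Finset.mem_range.1 hi, hc⟩
          rw [this, zero_mul]
      have := ltil_lt_succ k
      omega

lemma ltil_small (k x : ℕ) (h1 : ltil k < x) (h2 : x < ltil (k+1)) : 3 ≤ k := by
  by_contra hc
  have hk : k = 0 ∨ k = 1 ∨ k = 2 := by omega
  rcases hk with rfl | rfl | rfl
  · have a1 : ltil 0 = 1 := rfl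
    have a2 : ltil (0+1) = 2 := rfl
    omega
  · have a1 : ltil 1 = 2 := rfl
    have a2 : ltil (1+1) = 3 := rfl
    omega
  · have a1 : ltil 2 = 3 := rfl
    have a2 : ltil (2+1) = 4 := rfl
    omega

lemma zex : ∀ x : ℕ, 0 < x → ∃ k b, ZRep k b ∧ x = zval k b := by
  intro x
  induction x using Nat.strong_induction_on with
  | _ x ih =>
    intro hx
    obtain ⟨k, hk1, hk2⟩ : ∃ k, ltil k ≤ x ∧ x < ltil (k+1) := by
      refine ⟨Nat.findGreatest (fun i => ltil i ≤ x) x, ?_, ?_⟩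
      · exact Nat.findGreatest_spec (P := fun i => ltil i ≤ x)
          (Nat.zero_le x) (show ltil 0 ≤ x from hx)
      · by_contra hc
        push_neg at hc
        have h1 : Nat.findGreatest (fun i => ltil i ≤ x) x + 1 ≤ x := by
          have := ltil_ge (Nat.findGreatest (fun i => ltil i ≤ x) x + 1); omega
        exact Nat.findGreatest_is_greatest (Nat.lt_succ_self _) h1 hc
    rcases Nat.eq_or_lt_of_le hk1 with he | hlt
    · refine ⟨k, fun i => if i = k then 1 else 0, ⟨?_, ?_, ?_, ?_, ?_⟩, ?_⟩
      · intro i; dsimp only; split <;> omega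
      · intro i hi; dsimp only; rw [if_neg (by omega)]
      · dsimp only; rw [if_pos rfl]
      · dsimp only
        rcases eq_or_ne 2 k with h2 | h2
        · rw [if_neg (by omega), zero_mul]
        · rw [if_neg h2, mul_zero]
      · intro i hi; dsimp only; rw [if_neg (by omega), zero_mul]
      · have hcongr : ∀ i ∈ Finset.range (k+1),
            (if i = k then 1 else 0) * ltil i = if i = k then ltil k else 0 := by
          intro i _
          split
          · rename_i hh; rw [hh, one_mul]
          · rw [zero_mul]
        rw [zval, Finset.sum_congr rfl hcongr, Finset.sum_ite_eq' (Finset.range (k+1)) k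
          (fun _ => ltil k), if_pos (Finset.self_mem_range_succ k)]
        exact he.symm
    · have hk3 : 3 ≤ k := ltil_small k x hlt hk2
      obtain ⟨m, hm⟩ : ∃ m, k = m+3 := ⟨k-3, by omega⟩
      have hrlt : x - ltil k < ltil (m+2) := by
        have h4 : ltil (m+4) = ltil (m+3) + ltil (m+2) := ltil_rec m
        rw [hm] at hk2 hlt ⊢
        rw [show m+3+1 = m+4 from rfl] at hk2
        omega
      have hlp := ltil_pos k
      obtain ⟨k', b', hzr', hval'⟩ := ih (x - ltil k) (by omega) (by omega)
      have hk' : k' + 2 ≤ k := by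
        have h1 : ltil k' ≤ x - ltil k := by rw [hval']; exact zval_ge hzr'
        have h2 : k' < m + 2 := ltil_mono.lt_iff_lt.1 (lt_of_le_of_lt h1 hrlt)
        omega
      obtain ⟨hle', hhi', hbk', h02', hadj'⟩ := hzr'
      refine ⟨k, fun i => if i = k then 1 else b' i, ⟨?_, ?_, ?_, ?_, ?_⟩, ?_⟩
      · intro i; dsimp only; split <;> [omega; exact hle' i]
      · intro i hi; dsimp only; rw [if_neg (by omega)]; exact hhi' i (by omega)
      · dsimp only; rw [if_pos rfl]
      · dsimp only; rw [if_neg (by omega), if_neg (by omega)]; exact h02'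
      · intro i hi; dsimp only
        by_cases hik : i + 1 = k
        · rw [if_neg (by omega), if_pos hik, mul_one]
          exact hhi' i (by omega)
        · rw [if_neg (by omega), if_neg hik]
          rcases Nat.lt_or_ge i k' with h5 | h5
          · exact hadj' i h5
          · rw [hhi' (i+1) (by omega), mul_zero]
      · rw [zval, Finset.sum_range_succ, if_pos rfl, one_mul]
        have hcongr : ∀ i ∈ Finset.range k,
            (if i = k then 1 else b' i) * ltil i = b' i * ltil i := by
          intro i hi
          rw [if_neg (by have := Finset.mem_range.1 hi; omega)]
        rw [Finset.sum_congr rfl hcongr]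
        have hsub : (∑ i ∈ Finset.range k, b' i * ltil i)
            = ∑ i ∈ Finset.range (k'+1), b' i * ltil i := by
          refine (Finset.sum_subset (Finset.range_subset_range.2 (by omega)) ?_).symm
          intro i hi hni
          have h6 : k' < i := by
            by_contra hcc
            exact hni (Finset.mem_range.2 (by omega))
          rw [hhi' i h6, zero_mul]
        rw [hsub, ← zval, ← hval']
        omega

lemma zuniq : ∀ x : ℕ, ∀ k b k' b', ZRep k b → ZRep k' b' →
    x = zval k b → x = zval k' b' → k = k' ∧ b = b' := by
  have key : ∀ (a:ℕ) (c:ℕ→ℕ) (a':ℕ) (c':ℕ→ℕ), ZRep a c → ZRep a' c' →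
      zval a c = zval a' c' → a < a' → False := by
    intro a c a' c' ha ha' hv hlt
    have h1 := zval_lt a c ha
    have h2 := zval_ge ha'
    have h3 : ltil (a+1) ≤ ltil a' := ltil_mono.le_iff_le.2 (by omega)
    omega
  intro x
  induction x using Nat.strong_induction_on with
  | _ x ih =>
    intro k b k' b' h h' hv hv'
    have hkk : k = k' := by
      rcases lt_trichotomy k k' with hl | he | hl
      · exact absurd (key k b k' b' h h' (hv.symm.trans hv') hl) not_false
      · exact he
      · exact absurd (key k' b' k b h' h (hv'.symm.trans hv) hl) not_false
    subst hkk
    have e1 : zval k b = (∑ i ∈ Finset.range k, b i * ltil i) + ltil k := by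
      rw [zval, Finset.sum_range_succ, h.2.2.1, one_mul]
    have e2 : zval k b' = (∑ i ∈ Finset.range k, b' i * ltil i) + ltil k := by
      rw [zval, Finset.sum_range_succ, h'.2.2.1, one_mul]
    have hs : (∑ i ∈ Finset.range k, b i * ltil i)
        = ∑ i ∈ Finset.range k, b' i * ltil i := by omega
    by_cases hz : ∃ i, i < k ∧ b i ≠ 0
    · have hz' : ∃ i, i < k ∧ b' i ≠ 0 := by
        by_contra hc
        push_neg at hc
        have hz0 : (∑ i ∈ Finset.range k, b' i * ltil i) = 0 :=
          Finset.sum_eq_zero fun i hi => by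
            rw [hc i (Finset.mem_range.1 hi), zero_mul]
        obtain ⟨i, hi, hbi⟩ := hz
        have h7 : b i * ltil i = 0 :=
          (Finset.sum_eq_zero_iff.1 (hs.trans hz0)) i (Finset.mem_range.2 hi)
        have := ltil_pos i
        rcases Nat.mul_eq_zero.1 h7 with h8 | h8 <;> omega
      obtain ⟨j, hj2, hk3, hzr, hval, hgr⟩ := trunc h hz
      obtain ⟨j', hj2', _, hzr', hval', hgr'⟩ := trunc h' hz'
      have hlt : zval j (fun i => if i ≤ j then b i else 0) < x := by
        have := ltil_pos k
        omega
      have heq : zval j (fun i => if i ≤ j then b i else 0)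
          = zval j' (fun i => if i ≤ j' then b' i else 0) := by
        rw [← hval, ← hval']; exact hs
      obtain ⟨hjj, hbb⟩ := ih _ hlt j _ j' _ hzr hzr' rfl heq
      subst hjj
      refine ⟨rfl, funext fun i => ?_⟩
      rcases Nat.lt_or_ge i (j+1) with h9 | h9
      · have := congrFun hbb i
        simp only [if_pos (show i ≤ j by omega)] at this
        exact this
      · rcases lt_trichotomy i k with ha | ha | ha
        · rw [hgr i (by omega) ha, hgr' i (by omega) ha]
        · rw [ha, h.2.2.1, h'.2.2.1]
        · rw [h.2.1 i ha, h'.2.1 i ha]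
    · push_neg at hz
      have hz0 : (∑ i ∈ Finset.range k, b i * ltil i) = 0 :=
        Finset.sum_eq_zero fun i hi => by
          rw [hz i (Finset.mem_range.1 hi), zero_mul]
      have hb0' : ∀ i, i < k → b' i = 0 := by
        intro i hi
        have h7 : b' i * ltil i = 0 :=
          (Finset.sum_eq_zero_iff.1 (hs.symm.trans hz0)) i (Finset.mem_range.2 hi)
        have := ltil_pos i
        rcases Nat.mul_eq_zero.1 h7 with h8 | h8 <;> omega
      refine ⟨rfl, funext fun i => ?_⟩
      rcases lt_trichotomy i k with ha | ha | ha
      · rw [hz i ha, hb0' i ha]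
      · rw [ha, h.2.2.1, h'.2.2.1]
      · rw [h.2.1 i ha, h'.2.1 i ha]

lemma sum_ext (c f : ℕ → ℕ) {M1 M2 : ℕ} (h : M1 ≤ M2) (hc : ∀ i, M1 ≤ i → c i = 0) :
    ∑ i ∈ Finset.range M2, c i * f i = ∑ i ∈ Finset.range M1, c i * f i := by
  refine (Finset.sum_subset (Finset.range_subset_range.2 h) ?_).symm
  intro i hi hni
  have h1 : M1 ≤ i := by
    by_contra hcc
    exact hni (Finset.mem_range.2 (by omega))
  rw [hc i h1, zero_mul]

lemma sum_ext' (c : ℕ → ℕ) {M1 M2 : ℕ} (h : M1 ≤ M2) (hc : ∀ i, M1 ≤ i → c i = 0) :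
    ∑ i ∈ Finset.range M2, c i = ∑ i ∈ Finset.range M1, c i := by
  refine (Finset.sum_subset (Finset.range_subset_range.2 h) ?_).symm
  intro i hi hni
  have h1 : M1 ≤ i := by
    by_contra hcc
    exact hni (Finset.mem_range.2 (by omega))
  exact hc i h1

lemma sum_exchange (c d e f : ℕ → ℕ) (M : ℕ) (hd : ∀ i, d i ≤ c i) :
    (∑ i ∈ Finset.range M, (c i - d i + e i) * f i) + ∑ i ∈ Finset.range M, d i * f i
      = (∑ i ∈ Finset.range M, c i * f i) + ∑ i ∈ Finset.range M, e i * f i := by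
  rw [← Finset.sum_add_distrib, ← Finset.sum_add_distrib]
  refine Finset.sum_congr rfl fun i _ => ?_
  have := hd i
  rw [← add_mul, ← add_mul]
  congr 1
  omega

lemma sum_exchange' (c d e : ℕ → ℕ) (M : ℕ) (hd : ∀ i, d i ≤ c i) :
    (∑ i ∈ Finset.range M, (c i - d i + e i)) + ∑ i ∈ Finset.range M, d i
      = (∑ i ∈ Finset.range M, c i) + ∑ i ∈ Finset.range M, e i := by
  rw [← Finset.sum_add_distrib, ← Finset.sum_add_distrib]
  refine Finset.sum_congr rfl fun i _ => ?_
  have := hd i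
  omega

lemma sum_single (M i a : ℕ) (f : ℕ → ℕ) (h : i < M) :
    ∑ j ∈ Finset.range M, (if j = i then a else 0) * f j = a * f i := by
  rw [Finset.sum_eq_single_of_mem i (Finset.mem_range.2 h)]
  · rw [if_pos rfl]
  · intro j _ hji
    rw [if_neg hji, zero_mul]

lemma sum_single' (M i a : ℕ) (h : i < M) :
    ∑ j ∈ Finset.range M, (if j = i then a else 0) = a := by
  rw [Finset.sum_eq_single_of_mem i (Finset.mem_range.2 h)]
  · rw [if_pos rfl]
  · intro j _ hji
    rw [if_neg hji]

lemma sum_double (M i a i' a' : ℕ) (f : ℕ → ℕ) (h : i < M) (h' : i' < M) (hne : i ≠ i') :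
    ∑ j ∈ Finset.range M, (if j = i then a else if j = i' then a' else 0) * f j
      = a * f i + a' * f i' := by
  have hpt : ∀ j, (if j = i then a else if j = i' then a' else 0) * f j
      = (if j = i then a else 0) * f j + (if j = i' then a' else 0) * f j := by
    intro j
    rcases eq_or_ne j i with rfl | h1
    · rw [if_pos rfl, if_pos rfl, if_neg hne, zero_mul, add_zero]
    · rw [if_neg h1, if_neg h1, zero_mul, zero_add]
  rw [Finset.sum_congr rfl (fun j _ => hpt j), Finset.sum_add_distrib,
    sum_single M i a f h, sum_single M i' a' f h']

lemma sum_double' (M i a i' a' : ℕ) (h : i < M) (h' : i' < M) (hne : i ≠ i') :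
    ∑ j ∈ Finset.range M, (if j = i then a else if j = i' then a' else 0) = a + a' := by
  have hpt : ∀ j, (if j = i then a else if j = i' then a' else 0)
      = (if j = i then a else 0) + (if j = i' then a' else 0) := by
    intro j
    rcases eq_or_ne j i with rfl | h1
    · rw [if_pos rfl, if_pos rfl, if_neg hne, add_zero]
    · rw [if_neg h1, if_neg h1, zero_add]
  rw [Finset.sum_congr rfl (fun j _ => hpt j), Finset.sum_add_distrib,
    sum_single' M i a h, sum_single' M i' a' h']

lemma powB {B : ℕ} (hB : 2 ≤ B) (i : ℕ) : 2 * B^i ≤ B^(i+1) := by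
  rw [pow_succ]
  calc 2 * B^i = B^i * 2 := by ring
  _ ≤ B^i * B := Nat.mul_le_mul_left _ hB

lemma powBpos {B : ℕ} (hB : 2 ≤ B) (i : ℕ) : 0 < B^i := pow_pos (by omega) i

lemma powBlt {B : ℕ} (hB : 2 ≤ B) : B < B^2 := by
  calc B = B * 1 := (mul_one B).symm
  _ < B * B := by
      have h1 : (1:ℕ) < B := by omega
      exact (Nat.mul_lt_mul_left (show 0 < B by omega)).2 h1
  _ = B^2 := (pow_two B).symm

lemma sum_norm (c f : ℕ → ℕ) (K M : ℕ)
    (hM : ∀ i, M ≤ i → (if i < K then c i else 0) = 0) :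
    ∑ i ∈ Finset.range M, (if i < K then c i else 0) * f i
      = ∑ i ∈ Finset.range K, c i * f i := by
  have h1 : (∑ i ∈ Finset.range K, c i * f i)
      = ∑ i ∈ Finset.range K, (if i < K then c i else 0) * f i :=
    Finset.sum_congr rfl fun i hi => by rw [if_pos (Finset.mem_range.1 hi)]
  rcases le_total K M with h | h
  · rw [sum_ext (fun i => if i < K then c i else 0) f h
      (fun i hi => by show (if i < K then c i else 0) = 0; rw [if_neg (by omega)]), ← h1]
  · rw [h1, sum_ext (fun i => if i < K then c i else 0) f h hM]

lemma sum_norm' (c : ℕ → ℕ) (K M : ℕ)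
    (hM : ∀ i, M ≤ i → (if i < K then c i else 0) = 0) :
    ∑ i ∈ Finset.range M, (if i < K then c i else 0)
      = ∑ i ∈ Finset.range K, c i := by
  have h1 : (∑ i ∈ Finset.range K, c i)
      = ∑ i ∈ Finset.range K, (if i < K then c i else 0) :=
    Finset.sum_congr rfl fun i hi => by rw [if_pos (Finset.mem_range.1 hi)]
  rcases le_total K M with h | h
  · rw [sum_ext' (fun i => if i < K then c i else 0) h
      (fun i hi => by show (if i < K then c i else 0) = 0; rw [if_neg (by omega)]), ← h1]
  · rw [h1, sum_ext' (fun i => if i < K then c i else 0) h hM]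

lemma zmin (x : ℕ) (hx : 0 < x) (k : ℕ) (b : ℕ → ℕ) (hzr : ZRep k b) (hval : x = zval k b) :
    ∀ k' : ℕ, ∀ c : ℕ → ℕ, x = ∑ i ∈ Finset.range (k' + 1), c i * ltil i →
      ∑ i ∈ Finset.range (k + 1), b i ≤ ∑ i ∈ Finset.range (k' + 1), c i := by
  have lt0 : ltil 0 = 1 := rfl
  have lt1 : ltil 1 = 2 := rfl
  have lt2 : ltil 2 = 3 := rfl
  have lt3 : ltil 3 = 4 := rfl
  have lt4 : ltil 4 = 7 := rfl
  set S : Set ℕ := {s : ℕ | ∃ K : ℕ, ∃ cc : ℕ → ℕ,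
    x = ∑ i ∈ Finset.range (K + 1), cc i * ltil i
      ∧ s = ∑ i ∈ Finset.range (K + 1), cc i} with hS
  have hSne : S.Nonempty := ⟨x, 0, fun _ => x, by
      rw [Finset.sum_range_one, lt0, mul_one], by rw [Finset.sum_range_one]⟩
  set m := sInf S with hm
  suffices hkey : (∑ i ∈ Finset.range (k + 1), b i) ≤ m by
    intro k' c hc
    exact le_trans hkey (Nat.sInf_le ⟨k', c, hc, rfl⟩)
  obtain ⟨K0, c0, hx0, hs0⟩ := Nat.sInf_mem hSne
  have hB : 2 ≤ m + 2 := by omega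
  have hterm0 : ∀ i, i < K0 + 1 → c0 i * ltil i ≤ x := by
    intro i hi
    rw [hx0]
    exact Finset.single_le_sum (f := fun i => c0 i * ltil i) (fun j _ => Nat.zero_le _)
      (Finset.mem_range.2 hi)
  have hsupp1 : ∀ i, x + 3 ≤ i → (if i < K0 + 1 then c0 i else 0) = 0 := by
    intro i hi
    by_cases hiK : i < K0 + 1
    · rw [if_pos hiK]
      by_contra hne0
      have h1 : ltil i ≤ c0 i * ltil i := Nat.le_mul_of_pos_left _ (by omega)
      have h2 := hterm0 i hiK
      have h3 := ltil_ge i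
      omega
    · rw [if_neg hiK]
  have hval1 : x = ∑ i ∈ Finset.range (x+3), (if i < K0 + 1 then c0 i else 0) * ltil i :=
    hx0.trans (sum_norm c0 ltil (K0+1) (x+3) hsupp1).symm
  have hcnt1 : (∑ i ∈ Finset.range (x+3), (if i < K0 + 1 then c0 i else 0)) = m := by
    rw [sum_norm' c0 (K0+1) (x+3) hsupp1]
    exact hs0.symm
  set WS : Set ℕ := {w : ℕ | ∃ cc : ℕ → ℕ, (∀ i, x + 3 ≤ i → cc i = 0) ∧
    (x = ∑ i ∈ Finset.range (x+3), cc i * ltil i) ∧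
    ((∑ i ∈ Finset.range (x+3), cc i) = m) ∧
    w = ∑ i ∈ Finset.range (x+3), cc i * (m+2)^i} with hWSdef
  have hWne : WS.Nonempty :=
    ⟨_, (fun i => if i < K0+1 then c0 i else 0), hsupp1, hval1, hcnt1, rfl⟩
  have hWbdd : BddAbove WS := by
    refine ⟨m * (m+2)^(x+3), fun w hw => ?_⟩
    obtain ⟨cc, h1, h2, h3, h4⟩ := hw
    rw [h4, ← h3, Finset.sum_mul]
    refine Finset.sum_le_sum fun i hi => ?_
    exact Nat.mul_le_mul_left _
      (Nat.pow_le_pow_right (by omega) (le_of_lt (Finset.mem_range.1 hi)))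
  obtain ⟨cc, hsup, hvalc, hcntc, hWc⟩ := Nat.sSup_mem hWne hWbdd
  have exch : ∀ d e : ℕ → ℕ, (∀ i, d i ≤ cc i) → (∀ i, x+3 ≤ i → e i = 0) →
      ((∑ i ∈ Finset.range (x+3), d i * ltil i) = ∑ i ∈ Finset.range (x+3), e i * ltil i) →
      ((∑ i ∈ Finset.range (x+3), e i) < (∑ i ∈ Finset.range (x+3), d i) ∨
        ((∑ i ∈ Finset.range (x+3), e i) = (∑ i ∈ Finset.range (x+3), d i) ∧
         (∑ i ∈ Finset.range (x+3), d i * (m+2)^i) < ∑ i ∈ Finset.range (x+3), e i * (m+2)^i)) →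
      False := by
    intro d e hdc hes hveq hdis
    have hv2 := sum_exchange cc d e ltil (x+3) hdc
    have hc2 := sum_exchange' cc d e (x+3) hdc
    have hw2 : (∑ i ∈ Finset.range (x+3), (cc i - d i + e i) * (m+2)^i)
          + (∑ i ∈ Finset.range (x+3), d i * (m+2)^i)
        = (∑ i ∈ Finset.range (x+3), cc i * (m+2)^i)
          + ∑ i ∈ Finset.range (x+3), e i * (m+2)^i :=
      sum_exchange cc d e (fun i => (m+2)^i) (x+3) hdc
    have hsup' : ∀ i, x+3 ≤ i → cc i - d i + e i = 0 := by
      intro i hi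
      have h1 := hsup i hi
      have h2 := hdc i
      have h3 := hes i hi
      omega
    have hvx : x = ∑ i ∈ Finset.range (x+3), (cc i - d i + e i) * ltil i := by omega
    rcases hdis with hlt | ⟨hceq, hWlt⟩
    · have h5 : (∑ i ∈ Finset.range (x+3), (cc i - d i + e i)) < m := by omega
      have hmem : (∑ i ∈ Finset.range (x+3), (cc i - d i + e i)) ∈ S := by
        exact ⟨x+2, (fun i => cc i - d i + e i), hvx, rfl⟩
      have := Nat.sInf_le hmem
      omega
    · have h5 : (∑ i ∈ Finset.range (x+3), (cc i - d i + e i)) = m := by omega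
      have hmem : (∑ i ∈ Finset.range (x+3), (cc i - d i + e i) * (m+2)^i) ∈ WS :=
        ⟨(fun i => cc i - d i + e i), hsup', hvx, h5, rfl⟩
      have h6 := le_csSup hWbdd hmem
      omega
  have hterm : ∀ i, i < x+3 → cc i * ltil i ≤ x := by
    intro i hi
    rw [hvalc]
    exact Finset.single_le_sum (f := fun i => cc i * ltil i) (fun j _ => Nat.zero_le _)
      (Finset.mem_range.2 hi)
  have hccM : ∀ i, 1 ≤ cc i → ltil i ≤ x := by
    intro i h1
    have hiM : i < x+3 := by
      by_contra hcon
      have := hsup i (by omega); omega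
    have h2 := hterm i hiM
    have h3 : ltil i ≤ cc i * ltil i := Nat.le_mul_of_pos_left _ (by omega)
    omega
  have hcc2 : ∀ i, 2 ≤ cc i → 2 * ltil i ≤ x := by
    intro i h1
    have hiM : i < x+3 := by
      by_contra hcon
      have := hsup i (by omega); omega
    have h2 := hterm i hiM
    have h3 : 2 * ltil i ≤ cc i * ltil i := Nat.mul_le_mul_right _ h1
    omega
  -- Step A : all digits ≤ 1
  have hA : ∀ i, cc i ≤ 1 := by
    intro i
    by_contra hcon
    push_neg at hcon
    have h2x := hcc2 i (by omega)
    have hgei := ltil_ge i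
    rcases Nat.lt_or_ge i 4 with h4 | h4
    · interval_cases i
      · -- i = 0 : 2·1 = 2 = ltil 1
        have hdc : ∀ j, (if j = 0 then 2 else 0) ≤ cc j := by
          intro j; rcases eq_or_ne j 0 with rfl | h
          · rw [if_pos rfl]; omega
          · rw [if_neg h]; omega
        have hes : ∀ j, x+3 ≤ j → (if j = 1 then 1 else 0) = 0 := by
          intro j hj; rw [if_neg (by omega)]
        have hveq : (∑ j ∈ Finset.range (x+3), (if j = 0 then 2 else 0) * ltil j)
            = ∑ j ∈ Finset.range (x+3), (if j = 1 then 1 else 0) * ltil j := by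
          rw [sum_single (x+3) 0 2 ltil (by omega), sum_single (x+3) 1 1 ltil (by omega),
            lt0, lt1]
        have hcl : (∑ j ∈ Finset.range (x+3), (if j = 1 then 1 else 0))
            < ∑ j ∈ Finset.range (x+3), (if j = 0 then 2 else 0) := by
          rw [sum_single' (x+3) 0 2 (by omega), sum_single' (x+3) 1 1 (by omega)]
          omega
        exact exch _ _ hdc hes hveq (Or.inl hcl)
      · -- i = 1 : 2·2 = 4 = ltil 3
        have hdc : ∀ j, (if j = 1 then 2 else 0) ≤ cc j := by
          intro j; rcases eq_or_ne j 1 with rfl | h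
          · rw [if_pos rfl]; omega
          · rw [if_neg h]; omega
        have hes : ∀ j, x+3 ≤ j → (if j = 3 then 1 else 0) = 0 := by
          intro j hj; rw [if_neg (by omega)]
        have hveq : (∑ j ∈ Finset.range (x+3), (if j = 1 then 2 else 0) * ltil j)
            = ∑ j ∈ Finset.range (x+3), (if j = 3 then 1 else 0) * ltil j := by
          rw [sum_single (x+3) 1 2 ltil (by omega), sum_single (x+3) 3 1 ltil (by omega),
            lt1, lt3]
        have hcl : (∑ j ∈ Finset.range (x+3), (if j = 3 then 1 else 0))
            < ∑ j ∈ Finset.range (x+3), (if j = 1 then 2 else 0) := by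
          rw [sum_single' (x+3) 1 2 (by omega), sum_single' (x+3) 3 1 (by omega)]
          omega
        exact exch _ _ hdc hes hveq (Or.inl hcl)
      · -- i = 2 : 2·3 = 6 = ltil 3 + ltil 1
        have hdc : ∀ j, (if j = 2 then 2 else 0) ≤ cc j := by
          intro j; rcases eq_or_ne j 2 with rfl | h
          · rw [if_pos rfl]; omega
          · rw [if_neg h]; omega
        have hes : ∀ j, x+3 ≤ j → (if j = 3 then 1 else if j = 1 then 1 else 0) = 0 := by
          intro j hj; rw [if_neg (by omega), if_neg (by omega)]
        have hveq : (∑ j ∈ Finset.range (x+3), (if j = 2 then 2 else 0) * ltil j)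
            = ∑ j ∈ Finset.range (x+3), (if j = 3 then 1 else if j = 1 then 1 else 0) * ltil j := by
          rw [sum_single (x+3) 2 2 ltil (by omega),
            sum_double (x+3) 3 1 1 1 ltil (by omega) (by omega) (by omega), lt1, lt2, lt3]
        have hce : (∑ j ∈ Finset.range (x+3), (if j = 3 then 1 else if j = 1 then 1 else 0))
            = ∑ j ∈ Finset.range (x+3), (if j = 2 then 2 else 0) := by
          rw [sum_single' (x+3) 2 2 (by omega),
            sum_double' (x+3) 3 1 1 1 (by omega) (by omega) (by omega)]
        have hwl : (∑ j ∈ Finset.range (x+3), (if j = 2 then 2 else 0) * (m+2)^j)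
            < ∑ j ∈ Finset.range (x+3), (if j = 3 then 1 else if j = 1 then 1 else 0) * (m+2)^j := by
          rw [sum_single (x+3) 2 2 (fun j => (m+2)^j) (by omega),
            sum_double (x+3) 3 1 1 1 (fun j => (m+2)^j) (by omega) (by omega) (by omega)]
          have hp : 2 * (m+2)^2 ≤ (m+2)^3 := powB hB 2
          have hq : 0 < (m+2)^1 := powBpos hB 1
          omega
        exact exch _ _ hdc hes hveq (Or.inr ⟨hce, hwl⟩)
      · -- i = 3 : 2·4 = 8 = ltil 4 + ltil 0
        have hdc : ∀ j, (if j = 3 then 2 else 0) ≤ cc j := by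
          intro j; rcases eq_or_ne j 3 with rfl | h
          · rw [if_pos rfl]; omega
          · rw [if_neg h]; omega
        have hes : ∀ j, x+3 ≤ j → (if j = 4 then 1 else if j = 0 then 1 else 0) = 0 := by
          intro j hj; rw [if_neg (by omega), if_neg (by omega)]
        have h4M : 4 < x + 3 := by rw [lt3] at h2x; omega
        have hveq : (∑ j ∈ Finset.range (x+3), (if j = 3 then 2 else 0) * ltil j)
            = ∑ j ∈ Finset.range (x+3), (if j = 4 then 1 else if j = 0 then 1 else 0) * ltil j := by
          rw [sum_single (x+3) 3 2 ltil (by omega),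
            sum_double (x+3) 4 1 0 1 ltil h4M (by omega) (by omega), lt0, lt3, lt4]
        have hce : (∑ j ∈ Finset.range (x+3), (if j = 4 then 1 else if j = 0 then 1 else 0))
            = ∑ j ∈ Finset.range (x+3), (if j = 3 then 2 else 0) := by
          rw [sum_single' (x+3) 3 2 (by omega),
            sum_double' (x+3) 4 1 0 1 h4M (by omega) (by omega)]
        have hwl : (∑ j ∈ Finset.range (x+3), (if j = 3 then 2 else 0) * (m+2)^j)
            < ∑ j ∈ Finset.range (x+3), (if j = 4 then 1 else if j = 0 then 1 else 0) * (m+2)^j := by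
          rw [sum_single (x+3) 3 2 (fun j => (m+2)^j) (by omega),
            sum_double (x+3) 4 1 0 1 (fun j => (m+2)^j) h4M (by omega) (by omega)]
          have hp : 2 * (m+2)^3 ≤ (m+2)^4 := powB hB 3
          have hq : 0 < (m+2)^0 := powBpos hB 0
          omega
        exact exch _ _ hdc hes hveq (Or.inr ⟨hce, hwl⟩)
    · -- i = n + 4 : 2·ltil i = ltil (i+1) + ltil (i-2)
      obtain ⟨n, rfl⟩ : ∃ n, i = n + 4 := ⟨i - 4, by omega⟩
      have hiM : n + 5 < x + 3 := by omega
      have hdc : ∀ j, (if j = n+4 then 2 else 0) ≤ cc j := by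
        intro j; rcases eq_or_ne j (n+4) with rfl | h
        · rw [if_pos rfl]; omega
        · rw [if_neg h]; omega
      have hes : ∀ j, x+3 ≤ j → (if j = n+5 then 1 else if j = n+2 then 1 else 0) = 0 := by
        intro j hj; rw [if_neg (by omega), if_neg (by omega)]
      have r1 : ltil (n+4) = ltil (n+3) + ltil (n+2) := ltil_rec n
      have r2 : ltil (n+5) = ltil (n+4) + ltil (n+3) := ltil_rec (n+1)
      have hveq : (∑ j ∈ Finset.range (x+3), (if j = n+4 then 2 else 0) * ltil j)
          = ∑ j ∈ Finset.range (x+3), (if j = n+5 then 1 else if j = n+2 then 1 else 0) * ltil j := by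
        rw [sum_single (x+3) (n+4) 2 ltil (by omega),
          sum_double (x+3) (n+5) 1 (n+2) 1 ltil hiM (by omega) (by omega)]
        omega
      have hce : (∑ j ∈ Finset.range (x+3), (if j = n+5 then 1 else if j = n+2 then 1 else 0))
          = ∑ j ∈ Finset.range (x+3), (if j = n+4 then 2 else 0) := by
        rw [sum_single' (x+3) (n+4) 2 (by omega),
          sum_double' (x+3) (n+5) 1 (n+2) 1 hiM (by omega) (by omega)]
      have hwl : (∑ j ∈ Finset.range (x+3), (if j = n+4 then 2 else 0) * (m+2)^j)
          < ∑ j ∈ Finset.range (x+3), (if j = n+5 then 1 else if j = n+2 then 1 else 0) * (m+2)^j := by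
        rw [sum_single (x+3) (n+4) 2 (fun j => (m+2)^j) (by omega),
          sum_double (x+3) (n+5) 1 (n+2) 1 (fun j => (m+2)^j) hiM (by omega) (by omega)]
        have hp : 2 * (m+2)^(n+4) ≤ (m+2)^(n+5) := powB hB (n+4)
        have hq : 0 < (m+2)^(n+2) := powBpos hB (n+2)
        omega
      exact exch _ _ hdc hes hveq (Or.inr ⟨hce, hwl⟩)
  -- Step B : no adjacent digits
  have hAdj : ∀ i, cc i * cc (i+1) = 0 := by
    intro i
    by_contra hcon
    obtain ⟨hc1, hc2⟩ := Nat.mul_ne_zero_iff.1 hcon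
    have hxi : ltil (i+1) ≤ x := hccM (i+1) (by omega)
    have hgei := ltil_ge (i+1)
    match i, hc1, hc2, hxi, hgei with
    | 0, hc1, hc2, hxi, hgei =>
      have hd1 : cc 1 ≠ 0 := hc2
      have hdc : ∀ j, (if j = 0 then 1 else if j = 1 then 1 else 0) ≤ cc j := by
        intro j
        rcases eq_or_ne j 0 with rfl | h
        · rw [if_pos rfl]; omega
        · rcases eq_or_ne j 1 with rfl | h'
          · rw [if_neg h, if_pos rfl]; omega
          · rw [if_neg h, if_neg h']; omega
      have hes : ∀ j, x+3 ≤ j → (if j = 2 then 1 else 0) = 0 := by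
        intro j hj; rw [if_neg (by omega)]
      have hveq : (∑ j ∈ Finset.range (x+3), (if j = 0 then 1 else if j = 1 then 1 else 0) * ltil j)
          = ∑ j ∈ Finset.range (x+3), (if j = 2 then 1 else 0) * ltil j := by
        rw [sum_double (x+3) 0 1 1 1 ltil (by omega) (by omega) (by omega),
          sum_single (x+3) 2 1 ltil (by omega), lt0, lt1, lt2]
      have hcl : (∑ j ∈ Finset.range (x+3), (if j = 2 then 1 else 0))
          < ∑ j ∈ Finset.range (x+3), (if j = 0 then 1 else if j = 1 then 1 else 0) := by
        rw [sum_double' (x+3) 0 1 1 1 (by omega) (by omega) (by omega),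
          sum_single' (x+3) 2 1 (by omega)]
        omega
      exact exch _ _ hdc hes hveq (Or.inl hcl)
    | 1, hc1, hc2, hxi, hgei =>
      have hd2 : cc 2 ≠ 0 := hc2
      have h3M : 3 < x + 3 := by omega
      have hdc : ∀ j, (if j = 1 then 1 else if j = 2 then 1 else 0) ≤ cc j := by
        intro j
        rcases eq_or_ne j 1 with rfl | h
        · rw [if_pos rfl]; omega
        · rcases eq_or_ne j 2 with rfl | h'
          · rw [if_neg h, if_pos rfl]; omega
          · rw [if_neg h, if_neg h']; omega
      have hes : ∀ j, x+3 ≤ j → (if j = 3 then 1 else if j = 0 then 1 else 0) = 0 := by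
        intro j hj; rw [if_neg (by omega), if_neg (by omega)]
      have hveq : (∑ j ∈ Finset.range (x+3), (if j = 1 then 1 else if j = 2 then 1 else 0) * ltil j)
          = ∑ j ∈ Finset.range (x+3), (if j = 3 then 1 else if j = 0 then 1 else 0) * ltil j := by
        rw [sum_double (x+3) 1 1 2 1 ltil (by omega) (by omega) (by omega),
          sum_double (x+3) 3 1 0 1 ltil h3M (by omega) (by omega), lt0, lt1, lt2, lt3]
      have hce : (∑ j ∈ Finset.range (x+3), (if j = 3 then 1 else if j = 0 then 1 else 0))
          = ∑ j ∈ Finset.range (x+3), (if j = 1 then 1 else if j = 2 then 1 else 0) := by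
        rw [sum_double' (x+3) 1 1 2 1 (by omega) (by omega) (by omega),
          sum_double' (x+3) 3 1 0 1 h3M (by omega) (by omega)]
      have hwl : (∑ j ∈ Finset.range (x+3), (if j = 1 then 1 else if j = 2 then 1 else 0) * (m+2)^j)
          < ∑ j ∈ Finset.range (x+3), (if j = 3 then 1 else if j = 0 then 1 else 0) * (m+2)^j := by
        rw [sum_double (x+3) 1 1 2 1 (fun j => (m+2)^j) (by omega) (by omega) (by omega),
          sum_double (x+3) 3 1 0 1 (fun j => (m+2)^j) h3M (by omega) (by omega)]
        have hp : 2 * (m+2)^2 ≤ (m+2)^3 := powB hB 2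
        have hq : (m+2) < (m+2)^2 := powBlt hB
        have hr : (m+2)^0 = 1 := pow_zero _
        have hs1 : (m+2)^1 = m+2 := pow_one _
        omega
      exact exch _ _ hdc hes hveq (Or.inr ⟨hce, hwl⟩)
    | (n+2), hc1, hc2, hxi, hgei =>
      have hd3 : cc (n+3) ≠ 0 := hc2
      have hxi' : ltil (n+3) ≤ x := hxi
      have hgei' : n + 4 ≤ ltil (n+3) := hgei
      have hiM : n + 4 < x + 3 := by omega
      have hdc : ∀ j, (if j = n+2 then 1 else if j = n+3 then 1 else 0) ≤ cc j := by
        intro j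
        rcases eq_or_ne j (n+2) with rfl | h
        · rw [if_pos rfl]; omega
        · rcases eq_or_ne j (n+3) with rfl | h'
          · rw [if_neg h, if_pos rfl]; omega
          · rw [if_neg h, if_neg h']; omega
      have hes : ∀ j, x+3 ≤ j → (if j = n+4 then 1 else 0) = 0 := by
        intro j hj; rw [if_neg (by omega)]
      have r1 : ltil (n+4) = ltil (n+3) + ltil (n+2) := ltil_rec n
      have hveq : (∑ j ∈ Finset.range (x+3), (if j = n+2 then 1 else if j = n+3 then 1 else 0) * ltil j)
          = ∑ j ∈ Finset.range (x+3), (if j = n+4 then 1 else 0) * ltil j := by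
        rw [sum_double (x+3) (n+2) 1 (n+3) 1 ltil (by omega) (by omega) (by omega),
          sum_single (x+3) (n+4) 1 ltil hiM]
        omega
      have hcl : (∑ j ∈ Finset.range (x+3), (if j = n+4 then 1 else 0))
          < ∑ j ∈ Finset.range (x+3), (if j = n+2 then 1 else if j = n+3 then 1 else 0) := by
        rw [sum_double' (x+3) (n+2) 1 (n+3) 1 (by omega) (by omega) (by omega),
          sum_single' (x+3) (n+4) 1 hiM]
        omega
      exact exch _ _ hdc hes hveq (Or.inl hcl)
  -- Step C : not both positions 0 and 2
  have hC : cc 0 * cc 2 = 0 := by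
    by_contra hcon
    obtain ⟨hc1, hc2⟩ := Nat.mul_ne_zero_iff.1 hcon
    have hxi : ltil 2 ≤ x := hccM 2 (by omega)
    rw [lt2] at hxi
    have hdc : ∀ j, (if j = 0 then 1 else if j = 2 then 1 else 0) ≤ cc j := by
      intro j
      rcases eq_or_ne j 0 with rfl | h
      · rw [if_pos rfl]; omega
      · rcases eq_or_ne j 2 with rfl | h'
        · rw [if_neg h, if_pos rfl]; omega
        · rw [if_neg h, if_neg h']; omega
    have hes : ∀ j, x+3 ≤ j → (if j = 3 then 1 else 0) = 0 := by
      intro j hj; rw [if_neg (by omega)]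
    have hveq : (∑ j ∈ Finset.range (x+3), (if j = 0 then 1 else if j = 2 then 1 else 0) * ltil j)
        = ∑ j ∈ Finset.range (x+3), (if j = 3 then 1 else 0) * ltil j := by
      rw [sum_double (x+3) 0 1 2 1 ltil (by omega) (by omega) (by omega),
        sum_single (x+3) 3 1 ltil (by omega), lt0, lt2, lt3]
    have hcl : (∑ j ∈ Finset.range (x+3), (if j = 3 then 1 else 0))
        < ∑ j ∈ Finset.range (x+3), (if j = 0 then 1 else if j = 2 then 1 else 0) := by
      rw [sum_double' (x+3) 0 1 2 1 (by omega) (by omega) (by omega),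
        sum_single' (x+3) 3 1 (by omega)]
      omega
    exact exch _ _ hdc hes hveq (Or.inl hcl)
  -- extract the top index and conclude via uniqueness
  have hne0 : ∃ i, i ≤ x+2 ∧ cc i ≠ 0 := by
    by_contra hcon
    push_neg at hcon
    have hz : (∑ i ∈ Finset.range (x+3), cc i * ltil i) = 0 :=
      Finset.sum_eq_zero fun i hi => by
        rw [hcon i (by have := Finset.mem_range.1 hi; omega), zero_mul]
    omega
  obtain ⟨i0, hi0le, hi0⟩ := hne0
  obtain ⟨k2, hspec2, hk2le, hgrA⟩ : ∃ k2, cc k2 ≠ 0 ∧ k2 ≤ x+2 ∧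
      ∀ i, k2 < i → i ≤ x+2 → cc i = 0 := by
    refine ⟨Nat.findGreatest (fun i => cc i ≠ 0) (x+2),
      Nat.findGreatest_spec (P := fun i => cc i ≠ 0) hi0le hi0,
      Nat.findGreatest_le _, ?_⟩
    intro i h1 h2
    by_contra hcc
    exact Nat.findGreatest_is_greatest h1 h2 hcc
  have hgr2 : ∀ i, k2 < i → cc i = 0 := by
    intro i hi
    rcases le_or_gt i (x+2) with h | h
    · exact hgrA i hi h
    · exact hsup i (by omega)
  have hone : cc k2 = 1 := by have := hA k2; omega
  have hzrc : ZRep k2 cc := ⟨hA, hgr2, hone, hC, fun i _ => hAdj i⟩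
  have hvc2 : x = zval k2 cc := by
    rw [zval, ← sum_ext cc ltil (show k2+1 ≤ x+3 by omega) (fun i hi => hgr2 i (by omega))]
    exact hvalc
  obtain ⟨hkk2, hbcc⟩ := zuniq x k b k2 cc hzr hzrc hval hvc2
  rw [hbcc, hkk2,
    ← sum_ext' cc (show k2+1 ≤ x+3 by omega) (fun i hi => hgr2 i (by omega)), hcntc]

theorem zeckendorf_lucas (x : ℕ) (hx : 0 < x) :
    ∃ k : ℕ, ∃ b : ℕ → ℕ,
      ((∀ i, b i ≤ 1) ∧ (∀ i, k < i → b i = 0) ∧ b k = 1 ∧ b 0 * b 2 = 0 ∧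
        (∀ i < k, b i * b (i + 1) = 0) ∧
        x = ∑ i ∈ Finset.range (k + 1), b i * ltil i) ∧
      (∀ k' : ℕ, ∀ c : ℕ → ℕ, x = ∑ i ∈ Finset.range (k' + 1), c i * ltil i →
        ∑ i ∈ Finset.range (k + 1), b i ≤ ∑ i ∈ Finset.range (k' + 1), c i) ∧
      (∀ k' : ℕ, ∀ b' : ℕ → ℕ,
        (∀ i, b' i ≤ 1) → (∀ i, k' < i → b' i = 0) → b' k' = 1 → b' 0 * b' 2 = 0 →
        (∀ i < k', b' i * b' (i + 1) = 0) →
        x = ∑ i ∈ Finset.range (k' + 1), b' i * ltil i →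
        k' = k ∧ b' = b) := by
  obtain ⟨k, b, hzr, hval⟩ := zex x hx
  refine ⟨k, b, ⟨hzr.1, hzr.2.1, hzr.2.2.1, hzr.2.2.2.1, hzr.2.2.2.2, hval⟩, ?_, ?_⟩
  · exact zmin x hx k b hzr hval
  · intro k' b' h1 h2 h3 h4 h5 h6
    exact zuniq x k' b' k b ⟨h1, h2, h3, h4, h5⟩ hzr h6 hval
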